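/- arXiv:2007.04615 — 3 statements merged into one kernel-verified Lean document; each statement's English description precedes it below -/
import Mathlib

section
/- For the one-dimensional Gaussian φ(t) = e^{-π t²} and the chirp operator N_u f(t) = e^{-iπ u t²} f(t), the modulus of the short-time Fourier transform of N_u φ with window φ satisfies |S_φ(N_u φ)(x,ξ)| = (4+u²)^{-1/4} e^{-π x²/2} e^{-2π(ξ + u x/2)²/(4+u²)} for all x, ξ, u ∈ ℝ. -/
open MeasureTheory

/-- For the Gaussian `φ(t) = e^{-π t²}` and the chirp `N_u φ(t) = e^{-iπ u t²} φ(t)`,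
the modulus of the short-time Fourier transform
`S_φ(N_u φ)(x,ξ) = ∫ (N_u φ)(t) φ(t-x) e^{-2πi tξ} dt` satisfies
`|S_φ(N_u φ)(x,ξ)| = (4+u²)^{-1/4} e^{-π x²/2} e^{-2π(ξ+ux/2)²/(4+u²)}`. -/
theorem stft_chirped_gaussian_abs (u x ξ : ℝ) :
    ‖∫ t : ℝ,
        (Complex.exp (-(Real.pi * u * t ^ 2 : ℝ) * Complex.I) *
            Complex.exp ((-(Real.pi * t ^ 2) : ℝ) : ℂ)) *
          (starRingEnd ℂ) (Complex.exp ((-(Real.pi * (t - x) ^ 2) : ℝ) : ℂ)) *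
          Complex.exp (-(2 * Real.pi * t * ξ : ℝ) * Complex.I)‖
      = (4 + u ^ 2) ^ (-(1 / 4 : ℝ)) * Real.exp (-Real.pi * x ^ 2 / 2) *
          Real.exp (-2 * Real.pi * (ξ + u * x / 2) ^ 2 / (4 + u ^ 2)) := by
  have hπ := Real.pi_pos
  set b : ℂ := -(2 * Real.pi) - Real.pi * u * Complex.I with hb
  have hbre : b.re < 0 := by
    simp [hb, Complex.sub_re, Complex.mul_re]
    linarith
  set c : ℂ := 2 * Real.pi * x - 2 * Real.pi * ξ * Complex.I with hc
  set d : ℂ := -(Real.pi * x ^ 2) with hd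
  have key : (∫ t : ℝ,
        (Complex.exp (-(Real.pi * u * t ^ 2 : ℝ) * Complex.I) *
            Complex.exp ((-(Real.pi * t ^ 2) : ℝ) : ℂ)) *
          (starRingEnd ℂ) (Complex.exp ((-(Real.pi * (t - x) ^ 2) : ℝ) : ℂ)) *
          Complex.exp (-(2 * Real.pi * t * ξ : ℝ) * Complex.I))
      = ∫ t : ℝ, Complex.exp (b * t ^ 2 + c * t + d) := by
    congr 1; ext t
    rw [← Complex.exp_conj]
    simp_rw [← Complex.exp_add]
    congr 1
    have : (starRingEnd ℂ) ((-(Real.pi * (t - x) ^ 2) : ℝ) : ℂ)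
        = ((-(Real.pi * (t - x) ^ 2) : ℝ) : ℂ) := Complex.conj_ofReal _
    rw [this]
    push_cast
    ring
  rw [key, integral_cexp_quadratic hbre c d]
  rw [norm_mul, Complex.norm_exp]
  have hbne : b ≠ 0 := fun h => by simp [h] at hbre
  rw [Complex.norm_cpow_of_ne_zero (div_ne_zero (Complex.ofReal_ne_zero.mpr Real.pi_ne_zero) (neg_ne_zero.mpr hbne))]
  have harg : ((1 : ℂ)/2).im = 0 := by norm_num
  have hre : ((1 : ℂ)/2).re = 1/2 := by norm_num
  rw [harg, hre]
  simp only [mul_zero, Real.exp_zero, div_one]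
  have h4u : (0:ℝ) < 4 + u ^ 2 := by positivity
  have habs : ‖(↑Real.pi / -b : ℂ)‖ = Real.pi / Real.sqrt (4 * Real.pi ^ 2 + Real.pi ^ 2 * u ^ 2) := by
    rw [norm_div, norm_neg]
    have : ‖b‖ = Real.sqrt (4 * Real.pi ^ 2 + Real.pi ^ 2 * u ^ 2) := by
      rw [Complex.norm_def, Complex.normSq_apply]
      congr 1
      simp [hb, Complex.sub_re, Complex.sub_im, Complex.mul_re, Complex.mul_im]
      ring
    rw [this, Complex.norm_real, Real.norm_eq_abs, abs_of_pos hπ]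
  rw [habs]
  have hfac : 4 * Real.pi ^ 2 + Real.pi ^ 2 * u ^ 2 = Real.pi ^ 2 * (4 + u ^ 2) := by ring
  have hsq : Real.sqrt (4 * Real.pi ^ 2 + Real.pi ^ 2 * u ^ 2)
      = Real.pi * Real.sqrt (4 + u ^ 2) := by
    rw [hfac, Real.sqrt_mul (by positivity), Real.sqrt_sq hπ.le]
  rw [hsq]
  have h1 : Real.pi / (Real.pi * Real.sqrt (4 + u ^ 2)) = (Real.sqrt (4 + u ^ 2))⁻¹ := by
    field_simp
  rw [h1]
  have h2 : (Real.sqrt (4 + u ^ 2))⁻¹ ^ (1/2 : ℝ) = (4 + u ^ 2) ^ (-(1/4 : ℝ)) := by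
    have hs : (Real.sqrt (4 + u ^ 2))⁻¹ = (4 + u ^ 2) ^ (-(1/2) : ℝ) := by
      rw [Real.sqrt_eq_rpow, ← Real.rpow_neg h4u.le]
    rw [hs, ← Real.rpow_mul h4u.le]
    norm_num
  rw [h2, mul_assoc, ← Real.exp_add]
  congr 1
  -- real part computation
  have hre2 : (d - c ^ 2 / (4 * b)).re
      = -Real.pi * x ^ 2 / 2 + -2 * Real.pi * (ξ + u * x / 2) ^ 2 / (4 + u ^ 2) := by
    have hA : (4:ℝ) + u ^ 2 ≠ 0 := ne_of_gt h4u
    have hB : Real.pi ≠ 0 := Real.pi_ne_zero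
    simp only [hb, hc, hd, Complex.sub_re, Complex.div_re, Complex.normSq_apply,
      Complex.mul_re, Complex.mul_im, Complex.ofReal_re, Complex.ofReal_im, Complex.I_re,
      Complex.I_im, Complex.neg_re, Complex.neg_im, pow_two, Complex.one_re, Complex.one_im,
      Complex.add_re, Complex.add_im, Complex.sub_im, Complex.re_ofNat, Complex.im_ofNat]
    ring_nf
    have hD : Real.pi ^ 2 * 64 + Real.pi ^ 2 * u ^ 2 * 16 = Real.pi ^ 2 * 16 * (4 + u ^ 2) := by
      ring
    rw [hD]
    field_simp
    ring
  rw [hre2]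
end

section
/- For 1 ≤ p < ∞, the L^p(ℝ²) norm of the short-time Fourier transform of the chirped Gaussian N_u φ with window φ equals c_p (4+u²)^{1/(2p) - 1/4}, where c_p = p^{-2/p}·(something independent of u); in particular ‖S_φ(N_u φ)‖_{L^p(ℝ²)} ≍ (1+|u|)^{1/p - 1/2} as |u| → ∞. -/
open MeasureTheory

/-- The short-time Fourier transform of the chirped Gaussian `N_u φ` with
Gaussian window `φ(t) = e^{-π t²}`, where `N_u f(t) = e^{-iπ u t²} f(t)`. -/
noncomputable def stftChirpGauss (u x ξ : ℝ) : ℂ :=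
  ∫ t : ℝ,
    (Complex.exp (-(Real.pi * u * t ^ 2 : ℝ) * Complex.I) *
        Complex.exp ((-(Real.pi * t ^ 2) : ℝ) : ℂ)) *
      (starRingEnd ℂ) (Complex.exp ((-(Real.pi * (t - x) ^ 2) : ℝ) : ℂ)) *
      Complex.exp (-(2 * Real.pi * t * ξ : ℝ) * Complex.I)

open Real Complex in
lemma stft_value (u x ξ : ℝ) :
    stftChirpGauss u x ξ =
      (↑π / -(((-(2*π) : ℝ) : ℂ) + ((-(π*u) : ℝ) : ℂ) * I)) ^ (1/2 : ℂ) *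
      Complex.exp (((-(π*x^2) : ℝ) : ℂ) -
        (((2*π*x : ℝ) : ℂ) + ((-(2*π*ξ) : ℝ) : ℂ) * I)^2 /
          (4 * (((-(2*π) : ℝ) : ℂ) + ((-(π*u) : ℝ) : ℂ) * I))) := by
  have hb : ((((-(2*π) : ℝ) : ℂ) + ((-(π*u) : ℝ) : ℂ) * I)).re < 0 := by
    simp [Real.pi_pos]
  have key := integral_cexp_quadratic hb
    (((2*π*x : ℝ) : ℂ) + ((-(2*π*ξ) : ℝ) : ℂ) * I) (((-(π*x^2) : ℝ) : ℂ))
  rw [stftChirpGauss, ← key]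
  congr 1
  ext t
  rw [← Complex.exp_conj, Complex.conj_ofReal, ← Complex.exp_add, ← Complex.exp_add,
    ← Complex.exp_add]
  congr 1
  push_cast
  ring

open MeasureTheory

open Real Complex in
lemma stft_norm (u x ξ : ℝ) :
    ‖stftChirpGauss u x ξ‖ =
      (4 + u^2) ^ (-(1/4) : ℝ) *
        Real.exp (-(π/2)*x^2 - 2*π*(ξ + u*x/2)^2/(4 + u^2)) := by
  have h4 : (0:ℝ) < 4 + u^2 := by positivity
  rw [stft_value, norm_mul]
  congr 1
  · rw [show (1/2 : ℂ) = ((1/2 : ℝ) : ℂ) by norm_num]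
    rw [Complex.norm_cpow_real]
    have h2 : ‖(↑π / -(((-(2*π) : ℝ) : ℂ) + ((-(π*u) : ℝ) : ℂ) * I))‖
        = (4+u^2) ^ (-(1/2) : ℝ) := by
      rw [norm_div]
      have h1 : -(((-(2*π) : ℝ) : ℂ) + ((-(π*u) : ℝ) : ℂ) * I)
          = ((2*π : ℝ) : ℂ) + ((π*u : ℝ) : ℂ) * I := by push_cast; ring
      rw [h1, Complex.norm_add_mul_I, Complex.norm_real, Real.norm_eq_abs, abs_of_pos Real.pi_pos]
      have h3 : (2*π)^2 + (π*u)^2 = π^2 * (4+u^2) := by ring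
      rw [h3, Real.sqrt_mul (by positivity), Real.sqrt_sq Real.pi_pos.le,
        Real.rpow_neg h4.le, Real.sqrt_eq_rpow]
      field_simp
    rw [h2, ← Real.rpow_mul h4.le]
    norm_num
  · rw [Complex.norm_exp]
    congr 1
    have hπ := Real.pi_ne_zero
    have h4' : (4:ℝ) + u^2 ≠ 0 := h4.ne'
    have hd1 : π^2*64 + π^2*u^2*16 ≠ 0 := by positivity
    have hd2 : (16:ℝ) + u^2*4 ≠ 0 := by positivity
    simp only [Complex.div_re, Complex.normSq_apply, Complex.mul_re, Complex.mul_im,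
      Complex.add_re, Complex.add_im, Complex.sub_re, Complex.sub_im, Complex.ofReal_re,
      Complex.ofReal_im, Complex.I_re, Complex.I_im, Complex.ofReal_mul, Complex.ofReal_neg,
      Complex.neg_re, Complex.neg_im, Complex.ofReal_pow, pow_two, Complex.re_ofNat, Complex.im_ofNat]
    field_simp
    ring_nf
    field_simp
    ring

noncomputable def shearEquiv (u : ℝ) : (ℝ × ℝ) ≃ᵐ (ℝ × ℝ) where
  toFun := fun z => (z.1, z.2 + u * z.1 / 2)
  invFun := fun z => (z.1, z.2 - u * z.1 / 2)
  left_inv := fun z => by simp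
  right_inv := fun z => by simp
  measurable_toFun := by
    show Measurable fun z : ℝ × ℝ => ((z.1, z.2 + u * z.1 / 2) : ℝ × ℝ)
    fun_prop
  measurable_invFun := by
    show Measurable fun z : ℝ × ℝ => ((z.1, z.2 - u * z.1 / 2) : ℝ × ℝ)
    fun_prop

lemma shear_mp (u : ℝ) :
    MeasurePreserving (shearEquiv u) (volume : Measure (ℝ × ℝ)) volume := by
  rw [Measure.volume_eq_prod]
  exact (MeasurePreserving.id volume).skew_product (by fun_prop)
    (Filter.Eventually.of_forall fun a => map_add_right_eq_self volume (u * a / 2))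

open Real in
lemma stft_integral (p : ℝ) (hp : 1 ≤ p) (u : ℝ) :
    (∫ z : ℝ × ℝ, ‖stftChirpGauss u z.1 z.2‖ ^ p)
      = (1/p) * (4 + u^2) ^ ((1:ℝ)/2 - p/4) := by
  have hp0 : (0:ℝ) < p := lt_of_lt_of_le one_pos hp
  have h4 : (0:ℝ) < 4 + u^2 := by positivity
  have step1 : ∀ z : ℝ × ℝ, ‖stftChirpGauss u z.1 z.2‖ ^ p
      = (4+u^2) ^ (-(p/4)) *
        (Real.exp (-(p*π/2)*z.1^2) *
          Real.exp (-(2*p*π/(4+u^2))*(z.2 + u*z.1/2)^2)) := by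
    intro z
    rw [stft_norm, Real.mul_rpow (by positivity) (Real.exp_nonneg _),
      ← Real.rpow_mul h4.le, ← Real.exp_mul, ← Real.exp_add]
    congr 1
    · congr 1
      ring
    · field_simp
      ring
  simp_rw [step1]
  rw [MeasureTheory.integral_const_mul]
  have step2 : (∫ z : ℝ × ℝ, Real.exp (-(p*π/2)*z.1^2) *
      Real.exp (-(2*p*π/(4+u^2))*(z.2 + u*z.1/2)^2))
      = ∫ w : ℝ × ℝ, Real.exp (-(p*π/2)*w.1^2) * Real.exp (-(2*p*π/(4+u^2))*w.2^2) := by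
    exact (shear_mp u).integral_comp'
      (fun w => Real.exp (-(p*π/2)*w.1^2) * Real.exp (-(2*p*π/(4+u^2))*w.2^2))
  rw [step2, Measure.volume_eq_prod,
    MeasureTheory.integral_prod_mul (fun x : ℝ => Real.exp (-(p*π/2)*x^2))
      (fun y : ℝ => Real.exp (-(2*p*π/(4+u^2))*y^2)),
    integral_gaussian, integral_gaussian]
  have e1 : Real.sqrt (π / (p*π/2)) = Real.sqrt (2/p) := by
    congr 1
    field_simp
  have e2 : Real.sqrt (π / (2*p*π/(4+u^2))) = Real.sqrt ((4+u^2)/(2*p)) := by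
    congr 1
    field_simp
  rw [e1, e2, ← Real.sqrt_mul (by positivity)]
  have e3 : 2/p * ((4+u^2)/(2*p)) = (4+u^2)/p^2 := by
    field_simp
  rw [e3, Real.sqrt_div h4.le, Real.sqrt_sq hp0.le, Real.sqrt_eq_rpow]
  rw [show (4+u^2) ^ (-(p/4)) * ((4+u^2) ^ ((1:ℝ)/2) / p)
      = (1/p) * ((4+u^2) ^ (-(p/4)) * (4+u^2) ^ ((1:ℝ)/2)) by ring,
    ← Real.rpow_add h4]
  ring_nf

lemma rpow_comparable {s t : ℝ} (hs : 0 < s) (ht : 0 < t) (hst : s ≤ 2*t) (hts : t ≤ 2*s)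
    (α : ℝ) : 2 ^ (-|α|) * t ^ α ≤ s ^ α ∧ s ^ α ≤ 2 ^ |α| * t ^ α := by
  rcases le_or_gt 0 α with h | h
  · rw [abs_of_nonneg h]
    constructor
    · have h1 : t ^ α ≤ 2 ^ α * s ^ α := by
        calc t ^ α ≤ (2*s) ^ α := Real.rpow_le_rpow ht.le hts h
          _ = 2 ^ α * s ^ α := Real.mul_rpow (by norm_num) hs.le
      have h2 := mul_le_mul_of_nonneg_left h1
        (Real.rpow_pos_of_pos two_pos (-α)).le
      calc (2:ℝ) ^ (-α) * t ^ α ≤ 2 ^ (-α) * (2 ^ α * s ^ α) := h2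
        _ = s ^ α := by rw [← mul_assoc, ← Real.rpow_add two_pos]; simp
    · calc s ^ α ≤ (2*t) ^ α := Real.rpow_le_rpow hs.le hst h
        _ = 2 ^ α * t ^ α := Real.mul_rpow (by norm_num) ht.le
  · rw [abs_of_neg h]
    constructor
    · calc (2:ℝ) ^ (-(-α)) * t ^ α = (2*t) ^ α := by
            rw [Real.mul_rpow (by norm_num) ht.le, neg_neg]
        _ ≤ s ^ α := Real.rpow_le_rpow_of_nonpos hs hst h.le
    · have h1 : (2*s) ^ α ≤ t ^ α := Real.rpow_le_rpow_of_nonpos ht hts h.le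
      rw [Real.mul_rpow (by norm_num) hs.le] at h1
      have h2 := mul_le_mul_of_nonneg_left h1
        (Real.rpow_pos_of_pos two_pos (-α)).le
      calc s ^ α = 2 ^ (-α) * (2 ^ α * s ^ α) := by
            rw [← mul_assoc, ← Real.rpow_add two_pos]; simp
        _ ≤ 2 ^ (-α) * t ^ α := h2

/-- For `1 ≤ p < ∞` the `L^p(ℝ²)`-norm of `S_φ(N_u φ)` equals
`c_p (4+u²)^{1/(2p)-1/4}` for a constant `c_p > 0` independent of `u`;
in particular it is comparable to `(1+|u|)^{1/p-1/2}`. -/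
theorem stft_chirped_gaussian_Lp_norm (p : ℝ) (hp : 1 ≤ p) :
    (∃ c > 0, ∀ u : ℝ,
        (∫ z : ℝ × ℝ, ‖stftChirpGauss u z.1 z.2‖ ^ p) ^ (1 / p)
          = c * (4 + u ^ 2) ^ (1 / (2 * p) - 1 / 4)) ∧
    ∃ c₁ > 0, ∃ c₂ > 0, ∀ u : ℝ,
      c₁ * (1 + |u|) ^ (1 / p - 1 / 2)
          ≤ (∫ z : ℝ × ℝ, ‖stftChirpGauss u z.1 z.2‖ ^ p) ^ (1 / p) ∧
        (∫ z : ℝ × ℝ, ‖stftChirpGauss u z.1 z.2‖ ^ p) ^ (1 / p)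
          ≤ c₂ * (1 + |u|) ^ (1 / p - 1 / 2) := by
  have hp0 : (0:ℝ) < p := lt_of_lt_of_le one_pos hp
  have hc : (0:ℝ) < (1/p) ^ (1/p) := Real.rpow_pos_of_pos (by positivity) _
  have key : ∀ u : ℝ,
      (∫ z : ℝ × ℝ, ‖stftChirpGauss u z.1 z.2‖ ^ p) ^ (1 / p)
        = (1/p) ^ (1/p) * (4 + u ^ 2) ^ (1 / (2 * p) - 1 / 4) := by
    intro u
    have h4 : (0:ℝ) < 4 + u^2 := by positivity
    rw [stft_integral p hp u,
      Real.mul_rpow (by positivity) (Real.rpow_nonneg h4.le _),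
      ← Real.rpow_mul h4.le]
    have he : ((1:ℝ)/2 - p/4) * (1/p) = 1/(2*p) - 1/4 := by
      have : p ≠ 0 := hp0.ne'
      field_simp
    rw [he]
  constructor
  · exact ⟨(1/p) ^ (1/p), hc, key⟩
  · refine ⟨(1/p) ^ (1/p) * 2 ^ (-|1/p - 1/2|), by positivity,
      (1/p) ^ (1/p) * 2 ^ (|1/p - 1/2|), by positivity, fun u => ?_⟩
    have h4 : (0:ℝ) < 4 + u^2 := by positivity
    set α : ℝ := 1/p - 1/2 with hα
    have hsval : (4 + u^2 : ℝ) ^ ((1:ℝ)/2) = Real.sqrt (4 + u^2) :=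
      (Real.rpow_natCast _ _ ▸ (Real.sqrt_eq_rpow _).symm)
    set s : ℝ := Real.sqrt (4 + u^2) with hsdef
    have hs : 0 < s := Real.sqrt_pos.mpr h4
    have ht : (0:ℝ) < 1 + |u| := by positivity
    have hst : s ≤ 2 * (1 + |u|) := by
      rw [hsdef, show (2 * (1 + |u|)) = Real.sqrt ((2 * (1 + |u|))^2) from
        (Real.sqrt_sq (by positivity)).symm]
      apply Real.sqrt_le_sqrt
      nlinarith [abs_nonneg u, sq_abs u]
    have hts : 1 + |u| ≤ 2 * s := by
      rw [hsdef, show (2 * Real.sqrt (4 + u^2)) = Real.sqrt ((2:ℝ)^2 * (4 + u^2)) from ?_]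
      · rw [show ((2:ℝ)^2 * (4 + u^2)) = (2:ℝ)^2 * (4 + u^2) from rfl]
        apply (Real.le_sqrt ht.le (by positivity)).mpr
        nlinarith [abs_nonneg u, sq_abs u]
      · rw [Real.sqrt_mul (by norm_num), Real.sqrt_sq (by norm_num)]
    have hcmp := rpow_comparable hs ht hst hts α
    have hkey2 : (∫ z : ℝ × ℝ, ‖stftChirpGauss u z.1 z.2‖ ^ p) ^ (1 / p)
        = (1/p) ^ (1/p) * s ^ α := by
      rw [key u, ← hsval, ← Real.rpow_mul h4.le]
      congr 2
      rw [hα]; ring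
    constructor
    · rw [hkey2, mul_assoc]
      exact mul_le_mul_of_nonneg_left hcmp.1 hc.le
    · rw [hkey2, mul_assoc]
      exact mul_le_mul_of_nonneg_left hcmp.2 hc.le
end

section
/- Let C be a real symmetric d×d matrix, D = (4I + C²)^{-1}, and Δ the 2d×2d block matrix [[2D, DC],[DC, I-2D]]. Then |S_φ(N_C φ)(x,ξ)| = det(4I + C²)^{-1/4} exp(-π Δ(ξ,x)·(ξ,x)) for all x,ξ ∈ ℝ^d, where φ(t) = e^{-π t·t} and N_C f(t) = e^{-iπ C t·t} f(t). -/
open MeasureTheory Matrix Complex Real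

noncomputable def gb (c : ℝ) : ℂ := -(2*π : ℝ) - (π*c : ℝ)*Complex.I

lemma gb_re_neg (c : ℝ) : (gb c).re < 0 := by
  simp only [gb, Complex.sub_re, Complex.neg_re, Complex.ofReal_re, Complex.mul_re,
    Complex.I_re, Complex.I_im, Complex.ofReal_im]
  have := Real.pi_pos; nlinarith

section helpers
variable {n : Type*} [Fintype n] [DecidableEq n]

lemma quad_eq_dot (M : Matrix n n ℝ) (v : n → ℝ) :
    ∑ i, ∑ j, M i j * v i * v j = v ⬝ᵥ (M *ᵥ v) := by
  simp only [dotProduct, Matrix.mulVec, Finset.mul_sum]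
  exact Finset.sum_congr rfl fun i _ => Finset.sum_congr rfl fun j _ => by ring

lemma conj_quad (U A : Matrix n n ℝ) (v w : n → ℝ) :
    v ⬝ᵥ ((U*A*Uᵀ) *ᵥ w) = (Uᵀ *ᵥ v) ⬝ᵥ (A *ᵥ (Uᵀ *ᵥ w)) := by
  rw [Matrix.mulVec_mulVec, Matrix.dotProduct_mulVec, Matrix.dotProduct_mulVec,
    Matrix.mulVec_transpose, Matrix.vecMul_vecMul, Matrix.mul_assoc]

lemma diag_quad (f : n → ℝ) (w : n → ℝ) :
    w ⬝ᵥ (Matrix.diagonal f *ᵥ w) = ∑ i, f i * w i ^ 2 := by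
  simp only [dotProduct, Matrix.mulVec_diagonal]
  exact Finset.sum_congr rfl fun i _ => by ring

lemma diag_bilin (f v w : n → ℝ) :
    v ⬝ᵥ (Matrix.diagonal f *ᵥ w) = ∑ i, f i * v i * w i := by
  simp only [dotProduct, Matrix.mulVec_diagonal]
  exact Finset.sum_congr rfl fun i _ => by ring

lemma conj_mul' (U A B : Matrix n n ℝ) (h : Uᵀ * U = 1) :
    (U*A*Uᵀ)*(U*B*Uᵀ) = U*(A*B)*Uᵀ := by
  rw [show (U*A*Uᵀ)*(U*B*Uᵀ) = U*(A*((Uᵀ*U)*(B*Uᵀ))) by simp only [Matrix.mul_assoc], h,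
    one_mul]
  simp only [Matrix.mul_assoc]

end helpers

lemma key1 (c X Ξ : ℝ) :
    ‖∫ t : ℝ, Complex.exp (gb c * t^2 + ((2*π*X : ℝ) - (2*π*Ξ : ℝ)*Complex.I) * t + (-(π*X^2) : ℝ))‖
    = (4+c^2) ^ (-(1/4:ℝ)) * Real.exp (-π * (2*(4+c^2)⁻¹*Ξ^2 +
        2*(4+c^2)⁻¹*c*Ξ*X + (1-2*(4+c^2)⁻¹)*X^2)) := by
  have hs : (0:ℝ) < 4 + c^2 := by positivity
  rw [integral_cexp_quadratic (gb_re_neg c)]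
  rw [norm_mul, Complex.norm_exp]
  congr 1
  · have h1 : ((1:ℂ)/2) = ((1/2 : ℝ) : ℂ) := by norm_num
    rw [h1, norm_cpow_real]
    have h2 : ‖(↑π / -gb c)‖ = (4+c^2) ^ (-(1/2:ℝ)) := by
      rw [Complex.norm_div, Complex.norm_of_nonneg Real.pi_pos.le, Complex.norm_def,
        Complex.normSq_apply]
      simp only [gb, Complex.neg_re, Complex.sub_re, Complex.neg_im, Complex.sub_im,
        Complex.ofReal_re, Complex.ofReal_im, Complex.mul_re, Complex.mul_im,
        Complex.I_re, Complex.I_im]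
      rw [show (-(-(2 * π) - (π * c * 0 - 0 * 1)) * -(-(2 * π) - (π * c * 0 - 0 * 1)) +
          -(-0 - (π * c * 1 + 0 * 0)) * -(-0 - (π * c * 1 + 0 * 0))) = π^2 * (4 + c^2) by ring]
      rw [Real.sqrt_mul (by positivity), Real.sqrt_sq Real.pi_pos.le,
        Real.rpow_neg hs.le, ← Real.sqrt_eq_rpow]
      field_simp
    rw [h2, ← Real.rpow_mul hs.le]
    norm_num
  · congr 1
    have hπ : (π:ℝ) ≠ 0 := Real.pi_ne_zero
    rw [Complex.sub_re]
    simp only [Complex.ofReal_re]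
    rw [Complex.div_re]
    simp only [gb, Complex.normSq_apply, Complex.mul_re, Complex.mul_im, Complex.sub_re,
      Complex.sub_im, Complex.neg_re, Complex.neg_im, Complex.ofReal_re, Complex.ofReal_im,
      Complex.I_re, Complex.I_im, pow_two]
    simp only [Complex.re_ofNat, Complex.im_ofNat]
    have hq : (4 + c^2 : ℝ) ≠ 0 := ne_of_gt hs
    have h16 : (16*π^2 : ℝ) ≠ 0 := by positivity
    rw [show ((4:ℝ) * (-(2 * π) - (π * c * 0 - 0 * 1)) - 0 * (-0 - (π * c * 1 + 0 * 0))) *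
          (4 * (-(2 * π) - (π * c * 0 - 0 * 1)) - 0 * (-0 - (π * c * 1 + 0 * 0))) +
        (4 * (-0 - (π * c * 1 + 0 * 0)) + 0 * (-(2 * π) - (π * c * 0 - 0 * 1))) *
          (4 * (-0 - (π * c * 1 + 0 * 0)) + 0 * (-(2 * π) - (π * c * 0 - 0 * 1)))
        = (16*π^2)*(4+c^2) by ring]
    have hq' : (4 + c*c : ℝ) ≠ 0 := by nlinarith [sq_nonneg c]
    field_simp
    ring

lemma key_prod (d : ℕ) (μ y η : Fin d → ℝ) :
    ‖∫ s : Fin d → ℝ, ∏ i, Complex.exp (gb (μ i) * (s i)^2 +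
        ((2*π*(y i) : ℝ) - (2*π*(η i) : ℝ)*Complex.I) * (s i) + (-(π*(y i)^2) : ℝ))‖
    = ∏ i, ((4+(μ i)^2) ^ (-(1/4:ℝ)) * Real.exp (-π * (2*(4+(μ i)^2)⁻¹*(η i)^2 +
        2*(4+(μ i)^2)⁻¹*(μ i)*(η i)*(y i) + (1-2*(4+(μ i)^2)⁻¹)*(y i)^2))) := by
  rw [MeasureTheory.integral_fintype_prod_volume_eq_prod (ι := Fin d)
    (E := fun _ : Fin d => ℝ) (f := fun (i : Fin d) (u : ℝ) => Complex.exp (gb (μ i) * u^2 +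
      ((2*π*(y i) : ℝ) - (2*π*(η i) : ℝ)*Complex.I) * u + (-(π*(y i)^2) : ℝ)))]
  rw [norm_prod]
  exact Finset.prod_congr rfl fun i _ => key1 (μ i) (y i) (η i)

/-- Let `C` be a real symmetric `d×d` matrix, `D = (4I + C²)⁻¹` and
`Δ = [[2D, DC],[DC, I-2D]]`.  Then the short-time Fourier transform of the chirped
Gaussian `N_C φ(t) = e^{-iπ Ct·t} e^{-π t·t}` with Gaussian window satisfies
`|S_φ(N_C φ)(x,ξ)| = det(4I+C²)^{-1/4} exp(-π Δ(ξ,x)·(ξ,x))`. -/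
theorem stft_matrix_chirp_abs (d : ℕ) (C : Matrix (Fin d) (Fin d) ℝ) (hC : C.IsSymm)
    (D : Matrix (Fin d) (Fin d) ℝ)
    (hD : D = ((4 : ℝ) • (1 : Matrix (Fin d) (Fin d) ℝ) + C ^ 2)⁻¹)
    (Δ : Matrix (Fin d ⊕ Fin d) (Fin d ⊕ Fin d) ℝ)
    (hΔ : Δ = Matrix.fromBlocks ((2 : ℝ) • D) (D * C) (D * C)
        (1 - (2 : ℝ) • D))
    (x ξ : Fin d → ℝ) :
    ‖∫ t : Fin d → ℝ,
        (Complex.exp (-(Real.pi * ∑ i, ∑ j, C i j * t i * t j : ℝ) * Complex.I) *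
            Complex.exp ((-(Real.pi * ∑ i, t i ^ 2) : ℝ) : ℂ)) *
          (starRingEnd ℂ) (Complex.exp ((-(Real.pi * ∑ i, (t i - x i) ^ 2) : ℝ) : ℂ)) *
          Complex.exp (-(2 * Real.pi * ∑ i, t i * ξ i : ℝ) * Complex.I)‖
      = ((4 : ℝ) • (1 : Matrix (Fin d) (Fin d) ℝ) + C ^ 2).det ^ (-(1 / 4 : ℝ)) *
          Real.exp (-Real.pi *
            ∑ i, ∑ j, Δ i j * (Sum.elim ξ x i) * (Sum.elim ξ x j)) := by
  classical
  -- spectral setup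
  have hH : C.IsHermitian := by
    rw [Matrix.IsHermitian, Matrix.conjTranspose_eq_transpose_of_trivial]; exact hC
  set U : Matrix (Fin d) (Fin d) ℝ :=
    ((Matrix.IsHermitian.eigenvectorUnitary hH : Matrix.unitaryGroup (Fin d) ℝ) :
      Matrix (Fin d) (Fin d) ℝ) with hU
  set μ : Fin d → ℝ := hH.eigenvalues with hμ
  have hUU : U * Uᵀ = 1 := by
    have := (Matrix.mem_unitaryGroup_iff).mp (Matrix.IsHermitian.eigenvectorUnitary hH).2
    rwa [Matrix.star_eq_conjTranspose, Matrix.conjTranspose_eq_transpose_of_trivial] at this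
  have hUU' : Uᵀ * U = 1 := by
    have := (Matrix.mem_unitaryGroup_iff').mp (Matrix.IsHermitian.eigenvectorUnitary hH).2
    rwa [Matrix.star_eq_conjTranspose, Matrix.conjTranspose_eq_transpose_of_trivial] at this
  have hspec : C = U * Matrix.diagonal μ * Uᵀ := by
    have := hH.spectral_theorem
    rwa [Unitary.conjStarAlgAut_apply, Matrix.star_eq_conjTranspose, Matrix.conjTranspose_eq_transpose_of_trivial,
      RCLike.ofReal_real_eq_id, Function.id_comp] at this
  have hdetU : U.det * U.det = 1 := by
    have := congrArg Matrix.det hUU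
    rwa [Matrix.det_mul, Matrix.det_transpose, Matrix.det_one] at this
  have hdet0 : U.det ≠ 0 := fun h => by simp [h] at hdetU
  have hsp : ∀ i, (0:ℝ) < 4 + μ i ^ 2 := fun i => by positivity
  -- matrix identities
  have h4C : (4:ℝ) • (1 : Matrix (Fin d) (Fin d) ℝ) + C^2
      = U * Matrix.diagonal (fun i => 4 + μ i ^ 2) * Uᵀ := by
    have h2 : C^2 = U * Matrix.diagonal (fun i => μ i * μ i) * Uᵀ := by
      rw [pow_two, hspec, conj_mul' U _ _ hUU', Matrix.diagonal_mul_diagonal]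
    have h1 : (4:ℝ) • (1 : Matrix (Fin d) (Fin d) ℝ)
        = U * Matrix.diagonal (fun _ : Fin d => (4:ℝ)) * Uᵀ := by
      rw [show Matrix.diagonal (fun _ : Fin d => (4:ℝ)) = (4:ℝ) • 1 from
        (Matrix.smul_one_eq_diagonal (4:ℝ)).symm]
      rw [Matrix.mul_smul, Matrix.smul_mul, mul_one, hUU]
    rw [h1, h2, ← Matrix.add_mul, ← Matrix.mul_add, ← Matrix.diagonal_add]
    congr 2
    funext i
    ring
  have hdet : ((4:ℝ) • (1 : Matrix (Fin d) (Fin d) ℝ) + C^2).det = ∏ i, (4 + μ i ^ 2) := by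
    rw [h4C, Matrix.det_mul_right_comm, hUU, one_mul, Matrix.det_diagonal]
  have hD' : D = U * Matrix.diagonal (fun i => (4 + μ i ^ 2)⁻¹) * Uᵀ := by
    rw [hD, h4C]
    apply Matrix.inv_eq_right_inv
    rw [conj_mul' U _ _ hUU', Matrix.diagonal_mul_diagonal]
    rw [show (fun i => (4 + μ i ^ 2) * (4 + μ i ^ 2)⁻¹) = fun _ => (1:ℝ) from
      funext fun i => mul_inv_cancel₀ (ne_of_gt (hsp i))]
    rw [Matrix.diagonal_one, mul_one, hUU]
  have hDC : D * C = U * Matrix.diagonal (fun i => (4 + μ i ^ 2)⁻¹ * μ i) * Uᵀ := by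
    rw [hD', hspec, conj_mul' U _ _ hUU', Matrix.diagonal_mul_diagonal]
  -- change of variables
  set y : Fin d → ℝ := Uᵀ *ᵥ x with hy
  set η : Fin d → ℝ := Uᵀ *ᵥ ξ with hη
  have hUy : U *ᵥ y = x := by rw [hy, Matrix.mulVec_mulVec, hUU, Matrix.one_mulVec]
  have : Invertible U := U.invertibleOfIsUnitDet ⟨⟨U.det, U.det, hdetU, hdetU⟩, rfl⟩
  let e : (Fin d → ℝ) ≃ₗ[ℝ] (Fin d → ℝ) := Matrix.toLinearEquiv' U this
  let em : (Fin d → ℝ) ≃ᵐ (Fin d → ℝ) := e.toContinuousLinearEquiv.toHomeomorph.toMeasurableEquiv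
  have habs : |U.det| = 1 := by
    rcases mul_self_eq_one_iff.mp hdetU with h | h <;> simp [h]
  have hmp : MeasurePreserving (⇑em) volume volume := by
    constructor
    · exact em.measurable
    · have hco : ⇑em = ⇑(Matrix.toLin' U) := rfl
      rw [hco, Real.map_matrix_volume_pi_eq_smul_volume_pi hdet0, abs_inv, habs]
      simp
  rw [← hmp.integral_comp']
  -- pointwise identity
  have hpt : ∀ s : Fin d → ℝ,
      (Complex.exp (-(Real.pi * ∑ i, ∑ j, C i j * (U *ᵥ s) i * (U *ᵥ s) j : ℝ) * Complex.I) *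
            Complex.exp ((-(Real.pi * ∑ i, (U *ᵥ s) i ^ 2) : ℝ) : ℂ)) *
          (starRingEnd ℂ) (Complex.exp ((-(Real.pi * ∑ i, ((U *ᵥ s) i - x i) ^ 2) : ℝ) : ℂ)) *
          Complex.exp (-(2 * Real.pi * ∑ i, (U *ᵥ s) i * ξ i : ℝ) * Complex.I)
      = ∏ i, Complex.exp (gb (μ i) * (s i)^2 +
          ((2*π*(y i) : ℝ) - (2*π*(η i) : ℝ)*Complex.I) * (s i) + (-(π*(y i)^2) : ℝ)) := by
    intro s
    set t : Fin d → ℝ := U *ᵥ s with ht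
    have hUts : Uᵀ *ᵥ t = s := by rw [ht, Matrix.mulVec_mulVec, hUU', Matrix.one_mulVec]
    have ha : ∑ i, ∑ j, C i j * t i * t j = ∑ i, μ i * s i ^ 2 := by
      rw [quad_eq_dot, hspec, conj_quad, hUts, diag_quad]
    have hb : ∑ i, t i ^ 2 = ∑ i, s i ^ 2 := by
      have h1 : (1 : Matrix (Fin d) (Fin d) ℝ) = U * Matrix.diagonal (fun _ => (1:ℝ)) * Uᵀ := by
        rw [Matrix.diagonal_one, mul_one, hUU]
      calc ∑ i, t i ^ 2 = t ⬝ᵥ ((1 : Matrix (Fin d) (Fin d) ℝ) *ᵥ t) := by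
            rw [Matrix.one_mulVec, dotProduct]
            exact Finset.sum_congr rfl fun i _ => (pow_two _).trans rfl
        _ = s ⬝ᵥ (Matrix.diagonal (fun _ => (1:ℝ)) *ᵥ s) := by rw [h1, conj_quad, hUts]
        _ = ∑ i, s i ^ 2 := by rw [diag_quad]; exact Finset.sum_congr rfl fun i _ => one_mul _
    have hc : ∑ i, (t i - x i) ^ 2 = ∑ i, (s i - y i) ^ 2 := by
      have h1 : (1 : Matrix (Fin d) (Fin d) ℝ) = U * Matrix.diagonal (fun _ => (1:ℝ)) * Uᵀ := by
        rw [Matrix.diagonal_one, mul_one, hUU]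
      have hsub : Uᵀ *ᵥ (t - x) = s - y := by rw [Matrix.mulVec_sub, hUts, hy]
      calc ∑ i, (t i - x i) ^ 2
          = (t - x) ⬝ᵥ ((1 : Matrix (Fin d) (Fin d) ℝ) *ᵥ (t - x)) := by
            rw [Matrix.one_mulVec, dotProduct]
            exact Finset.sum_congr rfl fun i _ => (pow_two _).trans rfl
        _ = (s - y) ⬝ᵥ (Matrix.diagonal (fun _ => (1:ℝ)) *ᵥ (s - y)) := by
            rw [h1, conj_quad, hsub]
        _ = ∑ i, (s i - y i) ^ 2 := by
            rw [diag_quad]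
            exact Finset.sum_congr rfl fun i _ => by simp only [Pi.sub_apply]; ring
    have hd : ∑ i, t i * ξ i = ∑ i, s i * η i := by
      calc ∑ i, t i * ξ i = t ⬝ᵥ ξ := rfl
        _ = (s ᵥ* Uᵀ) ⬝ᵥ ξ := by rw [Matrix.vecMul_transpose, ht]
        _ = s ⬝ᵥ (Uᵀ *ᵥ ξ) := (Matrix.dotProduct_mulVec s Uᵀ ξ).symm
        _ = ∑ i, s i * η i := by rw [hη, dotProduct]
    rw [show (starRingEnd ℂ) (Complex.exp ((-(Real.pi * ∑ i, (t i - x i) ^ 2) : ℝ) : ℂ))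
        = Complex.exp ((-(Real.pi * ∑ i, (t i - x i) ^ 2) : ℝ) : ℂ) by
      rw [← Complex.ofReal_exp, Complex.conj_ofReal, Complex.ofReal_exp]]
    rw [← Complex.exp_add, ← Complex.exp_add, ← Complex.exp_add, ← Complex.exp_sum]
    congr 1
    rw [ha, hb, hc, hd]
    simp only [gb]
    push_cast
    simp only [Finset.mul_sum, Finset.sum_mul, neg_mul, ← Finset.sum_neg_distrib,
      ← Finset.sum_add_distrib]
    refine Finset.sum_congr rfl fun i _ => ?_
    push_cast
    ring
  rw [show (∫ s : Fin d → ℝ,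
      (Complex.exp (-(Real.pi * ∑ i, ∑ j, C i j * (em s) i * (em s) j : ℝ) * Complex.I) *
            Complex.exp ((-(Real.pi * ∑ i, (em s) i ^ 2) : ℝ) : ℂ)) *
          (starRingEnd ℂ) (Complex.exp ((-(Real.pi * ∑ i, ((em s) i - x i) ^ 2) : ℝ) : ℂ)) *
          Complex.exp (-(2 * Real.pi * ∑ i, (em s) i * ξ i : ℝ) * Complex.I))
      = ∫ s : Fin d → ℝ, ∏ i, Complex.exp (gb (μ i) * (s i)^2 +
          ((2*π*(y i) : ℝ) - (2*π*(η i) : ℝ)*Complex.I) * (s i) + (-(π*(y i)^2) : ℝ)) from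
    integral_congr_ae (Filter.Eventually.of_forall fun s => hpt s)]
  rw [key_prod d μ y η]
  -- now the right-hand side
  rw [hdet, ← Real.finset_prod_rpow _ _ (fun i _ => (hsp i).le)]
  have h1d : (1 : Matrix (Fin d) (Fin d) ℝ) = U * Matrix.diagonal (fun _ => (1:ℝ)) * Uᵀ := by
    rw [Matrix.diagonal_one, mul_one, hUU]
  have hq1 : ξ ⬝ᵥ (D *ᵥ ξ) = ∑ i, (4 + μ i ^ 2)⁻¹ * (η i * η i) := by
    rw [hD', conj_quad, ← hη, diag_bilin]
    exact Finset.sum_congr rfl fun i _ => by ring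
  have hq2 : ξ ⬝ᵥ ((D * C) *ᵥ x) = ∑ i, ((4 + μ i ^ 2)⁻¹ * μ i) * (η i * y i) := by
    rw [hDC, conj_quad, ← hη, ← hy, diag_bilin]
    exact Finset.sum_congr rfl fun i _ => by ring
  have hq2' : x ⬝ᵥ ((D * C) *ᵥ ξ) = ∑ i, ((4 + μ i ^ 2)⁻¹ * μ i) * (η i * y i) := by
    rw [hDC, conj_quad, ← hη, ← hy, diag_bilin]
    exact Finset.sum_congr rfl fun i _ => by ring
  have hq3 : x ⬝ᵥ x = ∑ i, y i * y i := by
    calc x ⬝ᵥ x = x ⬝ᵥ ((1 : Matrix (Fin d) (Fin d) ℝ) *ᵥ x) := by rw [Matrix.one_mulVec]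
      _ = ∑ i, y i * y i := by
          rw [h1d, conj_quad, ← hy, diag_bilin]
          exact Finset.sum_congr rfl fun i _ => by ring
  have hq4 : x ⬝ᵥ (D *ᵥ x) = ∑ i, (4 + μ i ^ 2)⁻¹ * (y i * y i) := by
    rw [hD', conj_quad, ← hy, diag_bilin]
    exact Finset.sum_congr rfl fun i _ => by ring
  have hQ : ∑ i, ∑ j, Δ i j * (Sum.elim ξ x i) * (Sum.elim ξ x j)
      = ∑ i, (2*(4+(μ i)^2)⁻¹*(η i)^2 + 2*(4+(μ i)^2)⁻¹*(μ i)*(η i)*(y i)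
          + (1-2*(4+(μ i)^2)⁻¹)*(y i)^2) := by
    rw [quad_eq_dot, hΔ, Matrix.fromBlocks_mulVec, sumElim_dotProduct_sumElim]
    simp only [Sum.elim_comp_inl, Sum.elim_comp_inr]
    rw [Matrix.smul_mulVec, Matrix.sub_mulVec, Matrix.smul_mulVec,
      Matrix.one_mulVec, dotProduct_add, dotProduct_add, dotProduct_smul,
      dotProduct_sub, dotProduct_smul, hq1, hq2, hq2', hq3, hq4]
    simp only [smul_eq_mul, Finset.mul_sum, ← Finset.sum_add_distrib, ← Finset.sum_sub_distrib]
    exact Finset.sum_congr rfl fun i _ => by ring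
  rw [Finset.prod_mul_distrib, ← Real.exp_sum, hQ, Finset.mul_sum]
end
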